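/- (Discrete maximum principle for follow-the-leader.) Let $v:[0,\rho_{\max}]\to[0,v_{\max}]$ be Lipschitz, nonincreasing, $v(\rho_{\max})=0$. Consider particles $x_0,\dots,x_n$ evolving on $[0,T]$ by the rightward follow-the-leader system $\dot x_n=v_{\max}$, $\dot x_i = v(\ell/(x_{i+1}-x_i))$ for $i<n$, with initial gaps $x_{i+1}(0)-x_i(0)\ge \ell/R_{\max}$ for some $R_{\max}\le\rho_{\max}$. Then for all $t\in[0,T]$ and all $i$, $x_{i+1}(t)-x_i(t)\ge \ell/R_{\max}$; equivalently, the discrete densities satisfy $R_{i+1/2}(t)\le R_{\max}$. -/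

import Mathlib

open Set

lemma barrier (T m C : ℝ) (hm : 0 < m) (hT : 0 ≤ T)
    (g G : ℝ → ℝ)
    (hg0 : m ≤ g 0)
    (hder : ∀ t ∈ Set.Icc 0 T, HasDerivAt g (G t) t)
    (hlb : ∀ t ∈ Set.Icc 0 T, m/2 ≤ g t → g t ≤ m → -(C * (m - g t)) ≤ G t) :
    ∀ t ∈ Set.Icc 0 T, m ≤ g t := by
  by_contra hcon
  push_neg at hcon
  obtain ⟨u, huT, hu⟩ := hcon
  have hu0 : (0:ℝ) ≤ u := huT.1
  have huT' : u ≤ T := huT.2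
  have hgc : ContinuousOn g (Set.Icc 0 T) :=
    fun t ht => (hder t ht).continuousAt.continuousWithinAt
  have hsub : Set.Icc 0 u ⊆ Set.Icc 0 T := Set.Icc_subset_Icc le_rfl huT'
  have hgcu : ContinuousOn g (Set.Icc 0 u) := hgc.mono hsub
  -- the set of times in [0,u] where g ≥ m
  set S : Set ℝ := {t | t ∈ Set.Icc 0 u ∧ m ≤ g t} with hS
  have hSne : S.Nonempty := ⟨0, ⟨le_rfl, hu0⟩, hg0⟩
  have hSbdd : BddAbove S := ⟨u, fun t ht => ht.1.2⟩
  have hSclosed : IsClosed S := by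
    have hEq : S = Set.Icc 0 u ∩ g ⁻¹' Set.Ici m := by
      ext t; simp [hS, Set.mem_setOf_eq]
    rw [hEq]
    exact hgcu.preimage_isClosed_of_isClosed isClosed_Icc isClosed_Ici
  set s := sSup S with hs
  have hsS : s ∈ S := hSclosed.csSup_mem hSne hSbdd
  have hsu : s ≤ u := hsS.1.2
  have hs0 : 0 ≤ s := hsS.1.1
  have hgs : m ≤ g s := hsS.2
  have hsu' : s < u := hsu.lt_of_ne (by
    intro h; rw [h] at hgs; exact absurd hgs (not_le.mpr hu))
  have hlt : ∀ t, s < t → t ≤ u → g t < m := by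
    intro t hst htu
    by_contra hge
    push_neg at hge
    have hmem : t ∈ S := ⟨⟨hs0.trans hst.le, htu⟩, hge⟩
    exact absurd (le_csSup hSbdd hmem) (not_le.mpr hst)
  have hsT : s ∈ Set.Icc 0 T := ⟨hs0, hsu.trans huT'⟩
  -- g s = m by continuity from the right
  have hgsm : g s = m := by
    refine le_antisymm ?_ hgs
    have htend : Filter.Tendsto g (nhdsWithin s (Set.Ioi s)) (nhds (g s)) :=
      ((hder s hsT).continuousAt.tendsto).mono_left nhdsWithin_le_nhds
    refine le_of_tendsto htend ?_
    filter_upwards [Ioc_mem_nhdsGT_of_mem ⟨le_rfl, hsu'⟩] with t ht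
    exact (hlt t ht.1 ht.2).le
  -- find u' ∈ (s,u] with g u' < m and g ≥ m/2 on [s,u']
  obtain ⟨u', hsu'2, hu'u, hglt, hge⟩ :
      ∃ u', s < u' ∧ u' ≤ u ∧ g u' < m ∧ ∀ t ∈ Set.Icc s u', m/2 ≤ g t := by
    set S2 : Set ℝ := {t | t ∈ Set.Icc s u ∧ g t ≤ m/2} with hS2
    rcases eq_empty_or_nonempty S2 with hS2e | hS2ne
    · refine ⟨u, hsu', le_rfl, hu, ?_⟩
      intro t ht
      by_contra hlt2
      push_neg at hlt2
      have hmem : t ∈ S2 := ⟨ht, hlt2.le⟩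
      rw [hS2e] at hmem
      exact hmem
    · have hS2closed : IsClosed S2 := by
        have hEq : S2 = Set.Icc s u ∩ g ⁻¹' Set.Iic (m/2) := by
          ext t; simp [hS2, Set.mem_setOf_eq]
        rw [hEq]
        exact ((hgcu.mono (Set.Icc_subset_Icc hs0 le_rfl)).preimage_isClosed_of_isClosed
          isClosed_Icc isClosed_Iic)
      have hS2bdd : BddBelow S2 := ⟨s, fun t ht => ht.1.1⟩
      set u' := sInf S2 with hu'
      have hu'S2 : u' ∈ S2 := hS2closed.csInf_mem hS2ne hS2bdd
      have hsu'' : s ≤ u' := hu'S2.1.1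
      have hu'u : u' ≤ u := hu'S2.1.2
      have hgu' : g u' ≤ m/2 := hu'S2.2
      have hslt : s < u' := hsu''.lt_of_ne (by
        intro h; rw [← h, hgsm] at hgu'; linarith)
      refine ⟨u', hslt, hu'u, by linarith, ?_⟩
      intro t ht
      rcases lt_or_eq_of_le ht.2 with h2 | h2
      · by_contra hlt2
        push_neg at hlt2
        have hmem : t ∈ S2 := ⟨⟨ht.1, h2.le.trans hu'u⟩, hlt2.le⟩
        exact absurd (csInf_le hS2bdd hmem) (not_le.mpr h2)
      · rw [h2]
        -- continuity from the left: g > m/2 on [s,u') so g u' ≥ m/2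
        have htend : Filter.Tendsto g (nhdsWithin u' (Set.Iio u')) (nhds (g u')) :=
          ((hder u' ⟨hs0.trans hsu'', (hu'u.trans huT')⟩).continuousAt.tendsto).mono_left
            nhdsWithin_le_nhds
        refine ge_of_tendsto htend ?_
        filter_upwards [Ioo_mem_nhdsLT_of_mem ⟨hslt, le_rfl⟩] with τ hτ
        have hnm : τ ∉ S2 := fun hmem => absurd (csInf_le hS2bdd hmem) (not_le.mpr hτ.2)
        by_contra hlt2
        push_neg at hlt2
        exact hnm ⟨⟨hτ.1.le, hτ.2.le.trans hu'u⟩, hlt2.le⟩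
  -- g ≤ m on [s,u']
  have hle : ∀ t ∈ Set.Icc s u', g t ≤ m := by
    intro t ht
    rcases eq_or_lt_of_le ht.1 with h | h
    · rw [← h, hgsm]
    · exact (hlt t h (ht.2.trans hu'u)).le
  have hsubT : Set.Icc s u' ⊆ Set.Icc 0 T :=
    Set.Icc_subset_Icc hs0 ((hu'u.trans huT'))
  -- the barrier function
  have hfd : ∀ t ∈ Set.Icc s u',
      HasDerivAt (fun τ => (m - g τ) * Real.exp (-C * τ))
        ((-(G t)) * Real.exp (-C * t) + (m - g t) * (Real.exp (-C * t) * (-C))) t := by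
    intro t ht
    have h1 : HasDerivAt (fun τ => m - g τ) (0 - G t) t :=
      (hasDerivAt_const t m).sub (hder t (hsubT ht))
    have h2 : HasDerivAt (fun τ : ℝ => Real.exp (-C * τ)) (Real.exp (-C * t) * (-C)) t := by
      have h3 : HasDerivAt (fun τ : ℝ => -C * τ) (-C) t := by
        simpa using (hasDerivAt_id t).const_mul (-C)
      simpa using h3.exp
    have h4 : HasDerivAt (fun τ => (m - g τ) * Real.exp (-C * τ)) _ t := h1.mul h2
    convert h4 using 1
    ring
  have hfanti : AntitoneOn (fun τ => (m - g τ) * Real.exp (-C * τ)) (Set.Icc s u') := by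
    apply antitoneOn_of_deriv_nonpos (convex_Icc s u')
    · exact fun t ht => (hfd t ht).continuousAt.continuousWithinAt
    · intro t ht
      rw [interior_Icc] at ht
      exact (hfd t (Ioo_subset_Icc_self ht)).differentiableAt.differentiableWithinAt
    · intro t ht
      rw [interior_Icc] at ht
      have ht' := Ioo_subset_Icc_self ht
      rw [(hfd t ht').deriv]
      have hE : (0:ℝ) < Real.exp (-C * t) := Real.exp_pos _
      have hlb' := hlb t (hsubT ht') (hge t ht') (hle t ht')
      nlinarith [hlb', hE]
  have hfin := hfanti (Set.left_mem_Icc.mpr hsu'2.le) (Set.right_mem_Icc.mpr hsu'2.le) hsu'2.le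
  simp only [hgsm, sub_self, zero_mul] at hfin
  have hE : (0:ℝ) < Real.exp (-C * u') := Real.exp_pos _
  nlinarith [hfin, hE, hglt]

lemma vbound (ℓ Rmax ρmax : ℝ) (hℓ : 0 < ℓ) (hRmax : 0 < Rmax) (hRρ : Rmax ≤ ρmax)
    (v : ℝ → ℝ) (K : NNReal) (hvLip : LipschitzWith K v)
    (hv_anti : AntitoneOn v (Set.Icc 0 ρmax))
    (hv_nonneg : ∀ r ∈ Set.Icc (0:ℝ) ρmax, 0 ≤ v r)
    (hvρmax : v ρmax = 0)
    (y : ℝ) (hy1 : ℓ/Rmax/2 ≤ y) (hy2 : y ≤ ℓ/Rmax) :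
    -((2*K*Rmax^2/ℓ) * (ℓ/Rmax - y)) ≤ v Rmax - v (ℓ / y) := by
  have hy0 : 0 < y := lt_of_lt_of_le (by positivity) hy1
  have hK0 : (0:ℝ) ≤ K := K.coe_nonneg
  have hρ0 : 0 < ρmax := lt_of_lt_of_le hRmax hRρ
  have hRmem : Rmax ∈ Set.Icc (0:ℝ) ρmax := ⟨hRmax.le, hRρ⟩
  -- from y ≤ ℓ/Rmax : Rmax * y ≤ ℓ, hence Rmax ≤ ℓ/y
  have hRy : Rmax * y ≤ ℓ := by
    rw [le_div_iff₀ hRmax] at hy2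
    linarith [hy2]
  have hRle : Rmax ≤ ℓ / y := (le_div_iff₀ hy0).mpr hRy
  -- from ℓ/Rmax/2 ≤ y : ℓ ≤ 2 * Rmax * y
  have h2Ry : ℓ ≤ 2 * Rmax * y := by
    have h2y : ℓ / Rmax ≤ 2 * y := by linarith
    rw [div_le_iff₀ hRmax] at h2y
    linarith [h2y]
  rcases le_or_gt (ℓ / y) ρmax with h | h
  · -- in range: antitone gives v (ℓ/y) ≤ v Rmax
    have hmem : ℓ / y ∈ Set.Icc (0:ℝ) ρmax := ⟨by positivity, h⟩
    have hv := hv_anti hRmem hmem hRle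
    have hC : (0:ℝ) ≤ (2*K*Rmax^2/ℓ) * (ℓ/Rmax - y) := by
      have : 0 ≤ ℓ/Rmax - y := by linarith
      positivity
    linarith
  · -- out of range: use Lipschitz bound near ρmax
    have hlip := hvLip.dist_le_mul (ℓ / y) ρmax
    rw [Real.dist_eq, Real.dist_eq] at hlip
    have habs : |v (ℓ / y) - v ρmax| ≤ K * |ℓ / y - ρmax| := hlip
    have h1 : v (ℓ / y) ≤ K * (ℓ / y - ρmax) := by
      rw [hvρmax] at habs
      rw [abs_of_pos (by linarith : (0:ℝ) < ℓ / y - ρmax)] at habs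
      have := abs_le.mp habs
      linarith [this.1, this.2]
    have h2 : K * (ℓ / y - ρmax) ≤ K * (ℓ / y - Rmax) := by
      apply mul_le_mul_of_nonneg_left _ hK0
      linarith
    have h3 : K * (ℓ / y - Rmax) ≤ (2*K*Rmax^2/ℓ) * (ℓ/Rmax - y) := by
      have key : (K:ℝ) * (ℓ - Rmax * y) * ℓ ≤ 2*K*Rmax^2 * (ℓ/Rmax - y) * y := by
        have hexp : 2*(K:ℝ)*Rmax^2 * (ℓ/Rmax - y) = 2*K*Rmax*(ℓ - Rmax*y) := by
          field_simp
        rw [hexp]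
        have hfac : (0:ℝ) ≤ ℓ - Rmax * y := by linarith
        nlinarith [mul_nonneg (mul_nonneg hK0 hfac) (sub_nonneg.mpr h2Ry)]
      have hs : ℓ / y - Rmax = (ℓ - Rmax * y) / y := by
        field_simp
      calc (K:ℝ) * (ℓ / y - Rmax) = K * (ℓ - Rmax * y) / y := by rw [hs]; ring
        _ ≤ 2*K*Rmax^2 * (ℓ/Rmax - y) / ℓ := by
            rw [div_le_div_iff₀ hy0 hℓ]; exact key
        _ = (2*K*Rmax^2/ℓ) * (ℓ/Rmax - y) := by ring
    have h4 : 0 ≤ v Rmax := hv_nonneg Rmax hRmem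
    linarith


/-- Discrete maximum principle for the rightward follow-the-leader system:
if the initial gaps are at least `ℓ / Rmax`, then they remain so for all times,
i.e. the discrete densities stay bounded by `Rmax`. -/
theorem stmt_5 (n : ℕ) (ℓ Rmax ρmax vmax T : ℝ)
    (hℓ : 0 < ℓ) (hRmax : 0 < Rmax) (hRρ : Rmax ≤ ρmax) (hT : 0 ≤ T)
    (v : ℝ → ℝ) (K : NNReal) (hvLip : LipschitzWith K v)
    (hv_anti : AntitoneOn v (Set.Icc 0 ρmax))
    (hv_nonneg : ∀ r ∈ Set.Icc (0:ℝ) ρmax, 0 ≤ v r)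
    (hvρmax : v ρmax = 0) (hv0 : v 0 = vmax)
    (x : ℕ → ℝ → ℝ)
    (hdn : ∀ t ∈ Set.Icc 0 T, HasDerivAt (x n) vmax t)
    (hdi : ∀ i < n, ∀ t ∈ Set.Icc 0 T, HasDerivAt (x i) (v (ℓ / (x (i+1) t - x i t))) t)
    (hinit : ∀ i < n, ℓ / Rmax ≤ x (i+1) 0 - x i 0) :
    ∀ t ∈ Set.Icc 0 T, ∀ i < n, ℓ / Rmax ≤ x (i+1) t - x i t := by
  have hm0 : 0 < ℓ / Rmax := by positivity
  have key : ∀ d : ℕ, ∀ i, i < n → n - i ≤ d →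
      ∀ t ∈ Set.Icc 0 T, ℓ / Rmax ≤ x (i+1) t - x i t := by
    intro d
    induction d with
    | zero => intro i hi hd; omega
    | succ d ih =>
      intro i hi hd
      rcases eq_or_lt_of_le (Nat.succ_le_of_lt hi) with hin | hin
      · -- i + 1 = n : the leader moves at speed vmax
        apply barrier T (ℓ / Rmax) (2*K*Rmax^2/ℓ) hm0 hT (fun t => x (i+1) t - x i t)
          (fun t => vmax - v (ℓ / (x (i+1) t - x i t)))
          (hinit i hi)
        · intro t ht
          have h2 := hdn t ht
          rw [← hin] at h2
          exact h2.sub (hdi i hi t ht)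
        · intro t ht hge hle
          have hb := vbound ℓ Rmax ρmax hℓ hRmax hRρ v K hvLip hv_anti hv_nonneg hvρmax
            (x (i+1) t - x i t) hge hle
          have hvm : v Rmax ≤ vmax := by
            rw [← hv0]
            exact hv_anti ⟨le_rfl, by linarith⟩ ⟨hRmax.le, hRρ⟩ hRmax.le
          linarith
      · -- i + 1 < n : the leader's gap is controlled by the inductive hypothesis
        have hIH := ih (i+1) hin (by omega)
        apply barrier T (ℓ / Rmax) (2*K*Rmax^2/ℓ) hm0 hT (fun t => x (i+1) t - x i t)
          (fun t => v (ℓ / (x (i+1+1) t - x (i+1) t)) - v (ℓ / (x (i+1) t - x i t)))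
          (hinit i hi)
        · intro t ht
          exact (hdi (i+1) hin t ht).sub (hdi i hi t ht)
        · intro t ht hge hle
          have hb := vbound ℓ Rmax ρmax hℓ hRmax hRρ v K hvLip hv_anti hv_nonneg hvρmax
            (x (i+1) t - x i t) hge hle
          have hz := hIH t ht
          have hz0 : (0:ℝ) < x (i+1+1) t - x (i+1) t := lt_of_lt_of_le hm0 hz
          have hle2 : ℓ / (x (i+1+1) t - x (i+1) t) ≤ Rmax := by
            rw [div_le_iff₀ hz0]
            rw [div_le_iff₀ hRmax] at hz
            linarith [hz]
          have hvm : v Rmax ≤ v (ℓ / (x (i+1+1) t - x (i+1) t)) :=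
            hv_anti ⟨by positivity, hle2.trans hRρ⟩ ⟨hRmax.le, hRρ⟩ hle2
          linarith
  intro t ht i hi
  exact key n i hi (Nat.sub_le n i) t ht
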